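/- (Fusion identity, Appendix A) Let N ≥ 1, c ∈ (0, π/2), and let θ₁,…,θ_N be pairwise distinct real numbers. Define θ̂ ∈ ℂ^{3N} by θ̂_j = θ_j, θ̂_{N+j} = θ_j + ic, θ̂_{2N+j} = θ_j − ic for j = 1,…,N, and the clusters I_j = {j} for 1 ≤ j ≤ N and I_{N+j} = {N+j, 2N+j} for 1 ≤ j ≤ N. Define η ∈ ℝ^{2N} and c' ∈ ℝ^{2N} by η_j = η_{N+j} = θ_j and c'_j = c, c'_{N+j} = 2c for j = 1,…,N. Then for every subset J ⊆ {1,…,2N}: ∏_{j∈J} ∏_{k∈{1,…,2N}∖J} ∏_{m∈I_j} ∏_{n∈I_k} [sinh²((θ̂_m−θ̂_n)/2) + sin²c] / sinh²((θ̂_m−θ̂_n)/2) = ∏_{j∈J} ∏_{k∈{1,…,2N}∖J} [sinh²((η_j−η_k)/2) + sin²((c'_j+c'_k)/2)] / [sinh²((η_j−η_k)/2) + sin²((c'_j−c'_k)/2)], where sinh denotes the complex hyperbolic sine and all denominators appearing are nonzero. -/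

import Mathlib

lemma keyc (u d : ℂ) : Complex.sinh u ^ 2 - Complex.sinh d ^ 2
    = Complex.sinh (u + d) * Complex.sinh (u - d) := by
  rw [Complex.sinh_add, Complex.sinh_sub]
  linear_combination Complex.sinh d ^ 2 * Complex.cosh_sq u - Complex.sinh u ^ 2 * Complex.cosh_sq d

lemma sin_sq_c (a : ℝ) : ((Real.sin a : ℝ) : ℂ) ^ 2 = - Complex.sinh (Complex.I * a) ^ 2 := by
  rw [mul_comm, Complex.sinh_mul_I]
  rw [mul_pow, Complex.I_sq, Complex.ofReal_sin]
  ring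

lemma sinh_ne_zero' (x a : ℝ) (h : x ≠ 0 ∨ Real.sin a ≠ 0) :
    Complex.sinh ((x : ℂ) + Complex.I * a) ≠ 0 := by
  have he : Complex.sinh ((x : ℂ) + Complex.I * a)
      = Complex.mk (Real.sinh x * Real.cos a) (Real.cosh x * Real.sin a) := by
    rw [Complex.mk_eq_add_mul_I, Complex.sinh_add, mul_comm Complex.I (a : ℂ),
      Complex.sinh_mul_I, Complex.cosh_mul_I]
    push_cast
    ring
  rw [he]
  intro hz
  rw [Complex.ext_iff] at hz
  obtain ⟨hre, him⟩ := hz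
  simp only [Complex.zero_re, Complex.zero_im] at hre him
  have hcosh : Real.cosh x ≠ 0 := ne_of_gt (Real.cosh_pos x)
  have hsa : Real.sin a = 0 := by
    rcases mul_eq_zero.mp him with h' | h'
    · exact absurd h' hcosh
    · exact h'
  have hx : x ≠ 0 := h.resolve_right (fun hh => hh hsa)
  have hca : Real.cos a ≠ 0 := by
    have h1 := Real.sin_sq_add_cos_sq a
    intro hc; rw [hsa, hc] at h1; norm_num at h1
  have hsx : Real.sinh x ≠ 0 := by simpa [Real.sinh_eq_zero] using hx
  exact (mul_ne_zero hsx hca) hre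

lemma fuse2 (w d s : ℂ) (hs : s ^ 2 = - Complex.sinh (2*d) ^ 2)
    (hp : Complex.sinh (w + d) ≠ 0) (hm : Complex.sinh (w - d) ≠ 0) :
    (Complex.sinh (w - d) ^ 2 + s ^ 2) / Complex.sinh (w - d) ^ 2 *
      ((Complex.sinh (w + d) ^ 2 + s ^ 2) / Complex.sinh (w + d) ^ 2)
    = (Complex.sinh w ^ 2 - Complex.sinh (3*d) ^ 2) /
        (Complex.sinh w ^ 2 - Complex.sinh d ^ 2) := by
  have h1 : Complex.sinh (w - d) ^ 2 + s ^ 2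
      = Complex.sinh (w + d) * Complex.sinh (w - 3*d) := by
    have h := keyc (w - d) (2*d)
    rw [show w - d + 2*d = w + d by ring, show w - d - 2*d = w - 3*d by ring] at h
    linear_combination h + hs
  have h2 : Complex.sinh (w + d) ^ 2 + s ^ 2
      = Complex.sinh (w + 3*d) * Complex.sinh (w - d) := by
    have h := keyc (w + d) (2*d)
    rw [show w + d + 2*d = w + 3*d by ring, show w + d - 2*d = w - d by ring] at h
    linear_combination h + hs
  rw [h1, h2, keyc w (3*d), keyc w d]
  field_simp

lemma fuse4 (w e s : ℂ) (hs : s ^ 2 = - Complex.sinh e ^ 2) (h0 : Complex.sinh w ≠ 0)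
    (hp : Complex.sinh (w + e) ≠ 0) (hm : Complex.sinh (w - e) ≠ 0) :
    (Complex.sinh w ^ 2 + s ^ 2) / Complex.sinh w ^ 2 *
      ((Complex.sinh (w + e) ^ 2 + s ^ 2) / Complex.sinh (w + e) ^ 2) *
    ((Complex.sinh (w - e) ^ 2 + s ^ 2) / Complex.sinh (w - e) ^ 2 *
      ((Complex.sinh w ^ 2 + s ^ 2) / Complex.sinh w ^ 2))
    = (Complex.sinh w ^ 2 - Complex.sinh (2*e) ^ 2) / Complex.sinh w ^ 2 := by
  have h1 : Complex.sinh w ^ 2 + s ^ 2 = Complex.sinh (w + e) * Complex.sinh (w - e) := by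
    have h := keyc w e
    linear_combination h + hs
  have h2 : Complex.sinh (w + e) ^ 2 + s ^ 2
      = Complex.sinh (w + 2*e) * Complex.sinh w := by
    have h := keyc (w + e) e
    rw [show w + e + e = w + 2*e by ring, show w + e - e = w by ring] at h
    linear_combination h + hs
  have h3 : Complex.sinh (w - e) ^ 2 + s ^ 2
      = Complex.sinh w * Complex.sinh (w - 2*e) := by
    have h := keyc (w - e) e
    rw [show w - e + e = w by ring, show w - e - e = w - 2*e by ring] at h
    linear_combination h + hs
  rw [h1, h2, h3, keyc w (2*e)]
  field_simp

lemma pairA (a b c : ℝ) :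
    (Complex.sinh (((a:ℂ) - (b:ℂ))/2) ^ 2 + ((Real.sin c : ℝ) : ℂ) ^ 2) /
      Complex.sinh (((a:ℂ) - (b:ℂ))/2) ^ 2
    = ((Real.sinh ((a-b)/2) ^ 2 + Real.sin ((c+c)/2) ^ 2 : ℝ) : ℂ) /
        ((Real.sinh ((a-b)/2) ^ 2 + Real.sin ((c-c)/2) ^ 2 : ℝ) : ℂ) := by
  rw [show ((a:ℂ) - (b:ℂ))/2 = (((a-b)/2 : ℝ) : ℂ) by push_cast; ring,
    ← Complex.ofReal_sinh, show (c-c)/2 = 0 by ring, show (c+c)/2 = c by ring, Real.sin_zero]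
  push_cast
  norm_num

lemma sin_half_ne (c : ℝ) (hc0 : 0 < c) (hc1 : c < Real.pi) : Real.sin (c/2) ≠ 0 :=
  ne_of_gt (Real.sin_pos_of_pos_of_lt_pi (by linarith) (by linarith [Real.pi_pos]))

lemma pairB (a b c : ℝ) (hc0 : 0 < c) (hc1 : c < Real.pi / 2) :
    (Complex.sinh (((a:ℂ) - ((b:ℂ) + Complex.I * c))/2) ^ 2 + ((Real.sin c : ℝ) : ℂ) ^ 2) /
      Complex.sinh (((a:ℂ) - ((b:ℂ) + Complex.I * c))/2) ^ 2 *
    ((Complex.sinh (((a:ℂ) - ((b:ℂ) - Complex.I * c))/2) ^ 2 + ((Real.sin c : ℝ) : ℂ) ^ 2) /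
      Complex.sinh (((a:ℂ) - ((b:ℂ) - Complex.I * c))/2) ^ 2)
    = ((Real.sinh ((a-b)/2) ^ 2 + Real.sin ((c+2*c)/2) ^ 2 : ℝ) : ℂ) /
        ((Real.sinh ((a-b)/2) ^ 2 + Real.sin ((c-2*c)/2) ^ 2 : ℝ) : ℂ) := by
  have hpi := Real.pi_pos
  set w : ℂ := (((a-b)/2 : ℝ) : ℂ) with hw
  set d : ℂ := Complex.I * (((c/2 : ℝ)) : ℂ) with hd
  have harg1 : ((a:ℂ) - ((b:ℂ) + Complex.I * c))/2 = w - d := by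
    rw [hw, hd]; push_cast; ring
  have harg2 : ((a:ℂ) - ((b:ℂ) - Complex.I * c))/2 = w + d := by
    rw [hw, hd]; push_cast; ring
  have hs : ((Real.sin c : ℝ) : ℂ) ^ 2 = - Complex.sinh (2*d) ^ 2 := by
    rw [show 2*d = Complex.I * ((c:ℝ) : ℂ) by rw [hd]; push_cast; ring]
    exact sin_sq_c c
  have hp : Complex.sinh (w + d) ≠ 0 := by
    rw [hw, hd]
    exact sinh_ne_zero' _ _ (Or.inr (sin_half_ne c hc0 (by linarith)))
  have hm : Complex.sinh (w - d) ≠ 0 := by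
    rw [show w - d = (((a-b)/2 : ℝ) : ℂ) + Complex.I * ((-(c/2) : ℝ) : ℂ) by
      rw [hw, hd]; push_cast; ring]
    refine sinh_ne_zero' _ _ (Or.inr ?_)
    rw [Real.sin_neg, neg_ne_zero]
    exact sin_half_ne c hc0 (by linarith)
  rw [harg1, harg2, fuse2 w d _ hs hp hm]
  rw [show (c-2*c)/2 = -(c/2) by ring, show (c+2*c)/2 = 3*c/2 by ring, Real.sin_neg, neg_sq]
  rw [Complex.ofReal_add, Complex.ofReal_add, Complex.ofReal_pow, Complex.ofReal_pow,
    Complex.ofReal_pow]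
  rw [sin_sq_c (3*c/2), sin_sq_c (c/2),
    show Complex.I * ((3*c/2 : ℝ) : ℂ) = 3*d by rw [hd]; push_cast; ring,
    show Complex.I * ((c/2 : ℝ) : ℂ) = d from rfl, Complex.ofReal_sinh, ← hw]
  ring

lemma pairC (a b c : ℝ) (hc0 : 0 < c) (hc1 : c < Real.pi / 2) :
    ((Complex.sinh ((((a:ℂ) + Complex.I * c) - (b:ℂ))/2) ^ 2 + ((Real.sin c : ℝ) : ℂ) ^ 2) /
      Complex.sinh ((((a:ℂ) + Complex.I * c) - (b:ℂ))/2) ^ 2) *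
    ((Complex.sinh ((((a:ℂ) - Complex.I * c) - (b:ℂ))/2) ^ 2 + ((Real.sin c : ℝ) : ℂ) ^ 2) /
      Complex.sinh ((((a:ℂ) - Complex.I * c) - (b:ℂ))/2) ^ 2)
    = ((Real.sinh ((a-b)/2) ^ 2 + Real.sin ((2*c+c)/2) ^ 2 : ℝ) : ℂ) /
        ((Real.sinh ((a-b)/2) ^ 2 + Real.sin ((2*c-c)/2) ^ 2 : ℝ) : ℂ) := by
  have hpi := Real.pi_pos
  set w : ℂ := (((a-b)/2 : ℝ) : ℂ) with hw
  set d : ℂ := Complex.I * (((c/2 : ℝ)) : ℂ) with hd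
  have harg1 : (((a:ℂ) + Complex.I * c) - (b:ℂ))/2 = w + d := by rw [hw, hd]; push_cast; ring
  have harg2 : (((a:ℂ) - Complex.I * c) - (b:ℂ))/2 = w - d := by rw [hw, hd]; push_cast; ring
  have hs : ((Real.sin c : ℝ) : ℂ) ^ 2 = - Complex.sinh (2*d) ^ 2 := by
    rw [show 2*d = Complex.I * ((c:ℝ) : ℂ) by rw [hd]; push_cast; ring]
    exact sin_sq_c c
  have hp : Complex.sinh (w + d) ≠ 0 := by
    rw [hw, hd]
    exact sinh_ne_zero' _ _ (Or.inr (sin_half_ne c hc0 (by linarith)))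
  have hm : Complex.sinh (w - d) ≠ 0 := by
    rw [show w - d = (((a-b)/2 : ℝ) : ℂ) + Complex.I * ((-(c/2) : ℝ) : ℂ) by
      rw [hw, hd]; push_cast; ring]
    refine sinh_ne_zero' _ _ (Or.inr ?_)
    rw [Real.sin_neg, neg_ne_zero]
    exact sin_half_ne c hc0 (by linarith)
  rw [harg1, harg2, mul_comm, fuse2 w d _ hs hp hm]
  rw [show (2*c-c)/2 = c/2 by ring, show (2*c+c)/2 = 3*c/2 by ring]
  rw [Complex.ofReal_add, Complex.ofReal_add, Complex.ofReal_pow, Complex.ofReal_pow,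
    Complex.ofReal_pow]
  rw [sin_sq_c (3*c/2), sin_sq_c (c/2),
    show Complex.I * ((3*c/2 : ℝ) : ℂ) = 3*d by rw [hd]; push_cast; ring,
    show Complex.I * ((c/2 : ℝ) : ℂ) = d from rfl, Complex.ofReal_sinh, ← hw]
  ring

lemma pairD (a b c : ℝ) (hab : a ≠ b) (hc0 : 0 < c) (hc1 : c < Real.pi / 2) :
    ((Complex.sinh ((((a:ℂ) + Complex.I * c) - ((b:ℂ) + Complex.I * c))/2) ^ 2 + ((Real.sin c : ℝ) : ℂ) ^ 2) /
      Complex.sinh ((((a:ℂ) + Complex.I * c) - ((b:ℂ) + Complex.I * c))/2) ^ 2 *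
    ((Complex.sinh ((((a:ℂ) + Complex.I * c) - ((b:ℂ) - Complex.I * c))/2) ^ 2 + ((Real.sin c : ℝ) : ℂ) ^ 2) /
      Complex.sinh ((((a:ℂ) + Complex.I * c) - ((b:ℂ) - Complex.I * c))/2) ^ 2)) *
    ((Complex.sinh ((((a:ℂ) - Complex.I * c) - ((b:ℂ) + Complex.I * c))/2) ^ 2 + ((Real.sin c : ℝ) : ℂ) ^ 2) /
      Complex.sinh ((((a:ℂ) - Complex.I * c) - ((b:ℂ) + Complex.I * c))/2) ^ 2 *
    ((Complex.sinh ((((a:ℂ) - Complex.I * c) - ((b:ℂ) - Complex.I * c))/2) ^ 2 + ((Real.sin c : ℝ) : ℂ) ^ 2) /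
      Complex.sinh ((((a:ℂ) - Complex.I * c) - ((b:ℂ) - Complex.I * c))/2) ^ 2))
    = ((Real.sinh ((a-b)/2) ^ 2 + Real.sin ((2*c+2*c)/2) ^ 2 : ℝ) : ℂ) /
        ((Real.sinh ((a-b)/2) ^ 2 + Real.sin ((2*c-2*c)/2) ^ 2 : ℝ) : ℂ) := by
  have hpi := Real.pi_pos
  have hsc : Real.sin c ≠ 0 :=
    ne_of_gt (Real.sin_pos_of_pos_of_lt_pi hc0 (by linarith))
  set w : ℂ := (((a-b)/2 : ℝ) : ℂ) with hw
  set e : ℂ := Complex.I * ((c : ℝ) : ℂ) with he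
  have harg1 : (((a:ℂ) + Complex.I * c) - ((b:ℂ) + Complex.I * c))/2 = w := by
    rw [hw]; push_cast; ring
  have harg2 : (((a:ℂ) + Complex.I * c) - ((b:ℂ) - Complex.I * c))/2 = w + e := by
    rw [hw, he]; push_cast; ring
  have harg3 : (((a:ℂ) - Complex.I * c) - ((b:ℂ) + Complex.I * c))/2 = w - e := by
    rw [hw, he]; push_cast; ring
  have harg4 : (((a:ℂ) - Complex.I * c) - ((b:ℂ) - Complex.I * c))/2 = w := by
    rw [hw]; push_cast; ring
  have hs : ((Real.sin c : ℝ) : ℂ) ^ 2 = - Complex.sinh e ^ 2 := by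
    rw [he]; exact sin_sq_c c
  have h0 : Complex.sinh w ≠ 0 := by
    rw [show w = (((a-b)/2 : ℝ) : ℂ) + Complex.I * ((0 : ℝ) : ℂ) by rw [hw]; push_cast; ring]
    refine sinh_ne_zero' _ _ (Or.inl ?_)
    exact div_ne_zero (sub_ne_zero.mpr hab) two_ne_zero
  have hp : Complex.sinh (w + e) ≠ 0 := by
    rw [hw, he]; exact sinh_ne_zero' _ _ (Or.inr hsc)
  have hm : Complex.sinh (w - e) ≠ 0 := by
    rw [show w - e = (((a-b)/2 : ℝ) : ℂ) + Complex.I * ((-c : ℝ) : ℂ) by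
      rw [hw, he]; push_cast; ring]
    refine sinh_ne_zero' _ _ (Or.inr ?_)
    rw [Real.sin_neg, neg_ne_zero]; exact hsc
  rw [harg1, harg2, harg3, harg4, fuse4 w e _ hs h0 hp hm]
  rw [show (2*c-2*c)/2 = 0 by ring, show (2*c+2*c)/2 = 2*c by ring, Real.sin_zero]
  rw [Complex.ofReal_add, Complex.ofReal_add, Complex.ofReal_pow, Complex.ofReal_pow,
    Complex.ofReal_pow]
  rw [sin_sq_c (2*c),
    show Complex.I * ((2*c : ℝ) : ℂ) = 2*e by rw [he]; push_cast; ring,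
    Complex.ofReal_sinh, ← hw]
  norm_num
  ring

lemma sin_ne' (t : ℝ) (h0 : t ≠ 0) (h1 : |t| < Real.pi) : Real.sin t ≠ 0 := by
  intro hs
  rcases h0.lt_or_gt with ht | ht
  · have h2 : 0 < Real.sin (-t) := Real.sin_pos_of_pos_of_lt_pi (by linarith)
      (by rw [abs_of_neg ht] at h1; linarith)
    rw [Real.sin_neg, hs] at h2; norm_num at h2
  · have h2 : 0 < Real.sin t := Real.sin_pos_of_pos_of_lt_pi ht
      (by rw [abs_of_pos ht] at h1; linarith)
    rw [hs] at h2; norm_num at h2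

lemma sinh_diff_ne (p q e f : ℝ) (h : p ≠ q ∨ Real.sin ((e - f)/2) ≠ 0) :
    Complex.sinh ((((p:ℂ) + Complex.I * e) - ((q:ℂ) + Complex.I * f))/2) ≠ 0 := by
  rw [show (((p:ℂ) + Complex.I * e) - ((q:ℂ) + Complex.I * f))/2
      = (((p-q)/2 : ℝ) : ℂ) + Complex.I * (((e-f)/2 : ℝ) : ℂ) by push_cast; ring]
  exact sinh_ne_zero' _ _ (h.imp (fun hpq => div_ne_zero (sub_ne_zero.mpr hpq) two_ne_zero) id)

/-- Fusion identity (Appendix A).  Indices are 0-based: θ̂_j = θ_j for j < N,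
θ̂_{N+j} = θ_j + ic, θ̂_{2N+j} = θ_j − ic; the clusters are I_j = {j} for j < N and
I_{N+j} = {N+j, 2N+j}; η_j = η_{N+j} = θ_j, c'_j = c, c'_{N+j} = 2c.  For every
J ⊆ {0,…,2N−1} the product of the cluster pair factors collapses to the fused form,
and all denominators appearing are nonzero. -/
theorem fusion_identity (N : ℕ) (hN : 1 ≤ N) (c : ℝ) (hc0 : 0 < c) (hc1 : c < Real.pi / 2)
    (θ : ℕ → ℝ) (hdist : ∀ j k, j < N → k < N → j ≠ k → θ j ≠ θ k)
    (θhat : ℕ → ℂ)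
    (hθhat : ∀ j, θhat j =
      if j < N then (θ j : ℂ)
      else if j < 2 * N then (θ (j - N) : ℂ) + Complex.I * c
      else (θ (j - 2 * N) : ℂ) - Complex.I * c)
    (I : ℕ → Finset ℕ)
    (hI : ∀ j, I j = if j < N then {j} else {j, j + N})
    (η : ℕ → ℝ) (hη : ∀ j, η j = if j < N then θ j else θ (j - N))
    (c' : ℕ → ℝ) (hc' : ∀ j, c' j = if j < N then c else 2 * c) :
    ∀ J : Finset ℕ, J ⊆ Finset.range (2 * N) →
      (∀ j ∈ J, ∀ k ∈ Finset.range (2 * N) \ J, ∀ m ∈ I j, ∀ n ∈ I k,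
        Complex.sinh ((θhat m - θhat n) / 2) ≠ 0)
      ∧ (∀ j ∈ J, ∀ k ∈ Finset.range (2 * N) \ J,
          (Real.sinh ((η j - η k) / 2)) ^ 2 + (Real.sin ((c' j - c' k) / 2)) ^ 2 ≠ 0)
      ∧ (∏ j ∈ J, ∏ k ∈ Finset.range (2 * N) \ J, ∏ m ∈ I j, ∏ n ∈ I k,
          ((Complex.sinh ((θhat m - θhat n) / 2)) ^ 2 + ((Real.sin c : ℝ) : ℂ) ^ 2) /
            (Complex.sinh ((θhat m - θhat n) / 2)) ^ 2)
        = ∏ j ∈ J, ∏ k ∈ Finset.range (2 * N) \ J,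
            ((((Real.sinh ((η j - η k) / 2)) ^ 2 + (Real.sin ((c' j + c' k) / 2)) ^ 2 : ℝ)) : ℂ) /
              ((((Real.sinh ((η j - η k) / 2)) ^ 2 + (Real.sin ((c' j - c' k) / 2)) ^ 2 : ℝ)) : ℂ) := by
  have hpi := Real.pi_pos
  have hval1 : ∀ p, p < N → θhat p = (θ p : ℂ) := by
    intro p hp; rw [hθhat]; rw [if_pos hp]
  have hval2 : ∀ p, N ≤ p → p < 2*N → θhat p = (θ (p - N) : ℂ) + Complex.I * c := by
    intro p h1 h2; rw [hθhat]; rw [if_neg (by omega), if_pos h2]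
  have hval3 : ∀ p, N ≤ p → p < 2*N → θhat (p + N) = (θ (p - N) : ℂ) - Complex.I * c := by
    intro p h1 h2; rw [hθhat]; rw [if_neg (by omega), if_neg (by omega),
      show p + N - 2*N = p - N by omega]
  have key1 : ∀ j, j < 2*N → ∀ m ∈ I j, ∃ e : ℝ,
      ((e = 0 ∧ j < N) ∨ (e = c ∧ ¬ j < N) ∨ (e = -c ∧ ¬ j < N)) ∧
      θhat m = ((θ (if j < N then j else j - N) : ℝ) : ℂ) + Complex.I * (e : ℂ) := by
    intro j hj2 m hm
    rw [hI] at hm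
    by_cases hjN : j < N
    · rw [if_pos hjN] at hm
      rw [Finset.mem_singleton] at hm
      exact ⟨0, Or.inl ⟨rfl, hjN⟩, by rw [hm, if_pos hjN, hval1 j hjN]; push_cast; ring⟩
    · rw [if_neg hjN] at hm
      rcases Finset.mem_insert.mp hm with hm | hm
      · exact ⟨c, Or.inr (Or.inl ⟨rfl, hjN⟩), by
          rw [hm, if_neg hjN, hval2 j (by omega) hj2]⟩
      · rw [Finset.mem_singleton] at hm
        subst hm
        exact ⟨-c, Or.inr (Or.inr ⟨rfl, hjN⟩), by
          rw [if_neg hjN, hval3 j (by omega) hj2]; push_cast; ring⟩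
  intro J hJ
  refine ⟨?_, ?_, ?_⟩
  · -- part 1 : complex sinh nonvanishing
    intro j hj k hk m hm n hn
    have hj2 : j < 2*N := Finset.mem_range.mp (hJ hj)
    obtain ⟨hk2', hkJ⟩ := Finset.mem_sdiff.mp hk
    have hk2 : k < 2*N := Finset.mem_range.mp hk2'
    have hjk : j ≠ k := by rintro rfl; exact hkJ hj
    obtain ⟨e, hecase, hme⟩ := key1 j hj2 m hm
    obtain ⟨f, hfcase, hnf⟩ := key1 k hk2 n hn
    rw [hme, hnf]
    apply sinh_diff_ne
    have habs : ∀ t : ℝ, t ≠ 0 → -Real.pi < t → t < Real.pi → Real.sin t ≠ 0 := by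
      intro t h0 h1 h2; exact sin_ne' t h0 (abs_lt.mpr ⟨h1, h2⟩)
    rcases hecase with ⟨rfl, hjN⟩ | ⟨rfl, hjN⟩ | ⟨rfl, hjN⟩ <;>
      rcases hfcase with ⟨rfl, hkN⟩ | ⟨rfl, hkN⟩ | ⟨rfl, hkN⟩
    · left
      rw [if_pos hjN, if_pos hkN]
      exact hdist j k hjN hkN hjk
    · exact Or.inr (habs _ (by intro h; exact hc0.ne' (by linarith)) (by linarith) (by linarith))
    · exact Or.inr (habs _ (by intro h; exact hc0.ne' (by linarith)) (by linarith) (by linarith))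
    · exact Or.inr (habs _ (by intro h; exact hc0.ne' (by linarith)) (by linarith) (by linarith))
    · left
      rw [if_neg hjN, if_neg hkN]
      exact hdist (j - N) (k - N) (by omega) (by omega) (by omega)
    · exact Or.inr (habs _ (by intro h; exact hc0.ne' (by linarith)) (by linarith) (by linarith))
    · exact Or.inr (habs _ (by intro h; exact hc0.ne' (by linarith)) (by linarith) (by linarith))
    · exact Or.inr (habs _ (by intro h; exact hc0.ne' (by linarith)) (by linarith) (by linarith))
    · left
      rw [if_neg hjN, if_neg hkN]
      exact hdist (j - N) (k - N) (by omega) (by omega) (by omega)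
  · -- part 2 : real denominators nonzero
    intro j hj k hk
    have hj2 : j < 2*N := Finset.mem_range.mp (hJ hj)
    obtain ⟨hk2', hkJ⟩ := Finset.mem_sdiff.mp hk
    have hk2 : k < 2*N := Finset.mem_range.mp hk2'
    have hjk : j ≠ k := by rintro rfl; exact hkJ hj
    rw [hη j, hη k, hc' j, hc' k]
    have hsinh_ne : ∀ x : ℝ, x ≠ 0 → Real.sinh (x/2) ≠ 0 := by
      intro x hx
      simp only [ne_eq, Real.sinh_eq_zero]
      intro h; exact hx (by linarith)
    by_cases hjN : j < N <;> by_cases hkN : k < N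
    · rw [if_pos hjN, if_pos hkN, if_pos hjN, if_pos hkN]
      have h1 : Real.sinh ((θ j - θ k)/2) ≠ 0 :=
        hsinh_ne _ (sub_ne_zero.mpr (hdist j k hjN hkN hjk))
      exact ne_of_gt (add_pos_of_pos_of_nonneg (by positivity) (sq_nonneg _))
    · rw [if_pos hjN, if_neg hkN, if_pos hjN, if_neg hkN]
      have h1 : Real.sin ((c - 2*c)/2) ≠ 0 := by
        rw [show (c - 2*c)/2 = -(c/2) by ring, Real.sin_neg, neg_ne_zero]
        exact sin_half_ne c hc0 (by linarith)
      exact ne_of_gt (add_pos_of_nonneg_of_pos (sq_nonneg _) (by positivity))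
    · rw [if_neg hjN, if_pos hkN, if_neg hjN, if_pos hkN]
      have h1 : Real.sin ((2*c - c)/2) ≠ 0 := by
        rw [show (2*c - c)/2 = c/2 by ring]
        exact sin_half_ne c hc0 (by linarith)
      exact ne_of_gt (add_pos_of_nonneg_of_pos (sq_nonneg _) (by positivity))
    · rw [if_neg hjN, if_neg hkN, if_neg hjN, if_neg hkN]
      have h1 : Real.sinh ((θ (j - N) - θ (k - N))/2) ≠ 0 :=
        hsinh_ne _ (sub_ne_zero.mpr (hdist (j-N) (k-N) (by omega) (by omega) (by omega)))
      exact ne_of_gt (add_pos_of_pos_of_nonneg (by positivity) (sq_nonneg _))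
  · -- part 3 : the product identity
    apply Finset.prod_congr rfl
    intro j hj
    apply Finset.prod_congr rfl
    intro k hk
    have hj2 : j < 2*N := Finset.mem_range.mp (hJ hj)
    obtain ⟨hk2', hkJ⟩ := Finset.mem_sdiff.mp hk
    have hk2 : k < 2*N := Finset.mem_range.mp hk2'
    have hjk : j ≠ k := by rintro rfl; exact hkJ hj
    rw [hI j, hI k, hη j, hη k, hc' j, hc' k]
    by_cases hjN : j < N <;> by_cases hkN : k < N
    · simp only [if_pos hjN, if_pos hkN]
      rw [Finset.prod_singleton, Finset.prod_singleton, hval1 j hjN, hval1 k hkN]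
      exact pairA (θ j) (θ k) c
    · simp only [if_pos hjN, if_neg hkN]
      rw [Finset.prod_singleton, Finset.prod_pair (show k ≠ k + N by omega)]
      rw [hval1 j hjN, hval2 k (by omega) hk2, hval3 k (by omega) hk2]
      exact pairB (θ j) (θ (k - N)) c hc0 hc1
    · simp only [if_neg hjN, if_pos hkN]
      rw [Finset.prod_pair (show j ≠ j + N by omega)]
      simp only [Finset.prod_singleton]
      rw [hval1 k hkN, hval2 j (by omega) hj2, hval3 j (by omega) hj2]
      exact pairC (θ (j - N)) (θ k) c hc0 hc1
    · simp only [if_neg hjN, if_neg hkN]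
      rw [Finset.prod_pair (show j ≠ j + N by omega)]
      simp only [Finset.prod_pair (show k ≠ k + N by omega)]
      rw [hval2 j (by omega) hj2, hval3 j (by omega) hj2,
        hval2 k (by omega) hk2, hval3 k (by omega) hk2]
      exact pairD (θ (j - N)) (θ (k - N)) c
        (hdist (j-N) (k-N) (by omega) (by omega) (by omega)) hc0 hc1
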